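/- Let U ⊆ ℝ^(n+2) be open, (ξ, N) a null frame on U, c : U → ℝ differentiable and nowhere zero, and φ : U → ℝ. (1) If the field Z := c • ξ satisfies fderiv ℝ Z p = φ(p) • id for all p ∈ U, then A*_ξ(p)(v) = -(φ(p)/c(p)) • v for every p ∈ U and every screen vector v at p (the null hypersurface is totally umbilical); if moreover φ ≡ 0 then A*_ξ(p)(v) = 0 (totally geodesic). (2) If the field Z := c • N satisfies fderiv ℝ Z p = φ(p) • id for all p ∈ U, then A_N(p)(v) = -(φ(p)/c(p)) • v for every p ∈ U and every screen vector v at p (the screen distribution is totally umbilical); if moreover φ ≡ 0 then A_N(p)(v) = 0 (totally geodesic). (Flat-Minkowski-ambient form of the paper's corollary on closed conformal fields lying in the radical or transversal direction.) -/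

import Mathlib

open scoped BigOperators

noncomputable section

/-- Euclidean space `ℝ^m`. -/
abbrev E (m : ℕ) : Type := EuclideanSpace ℝ (Fin m)

/-- The Minkowski bilinear form `η(x,y) = -(x 0)(y 0) + ∑_{i≥1} (x i)(y i)` on `ℝ^(n+2)`. -/
def eta {n : ℕ} (x y : E (n + 2)) : ℝ :=
  (∑ i, x i * y i) - 2 * (x 0 * y 0)

/-- Screen projection `P_p(w) = w - η(w,N)ξ - η(w,ξ)N` determined by the null frame at a point. -/
def sproj {n : ℕ} (xi N w : E (n + 2)) : E (n + 2) :=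
  w - eta w N • xi - eta w xi • N

/-- Screen shape operator `A*_ξ(p)(v) = -P_p(D_v ξ (p))`. -/
def Astar {n : ℕ} (xi N : E (n + 2) → E (n + 2)) (p v : E (n + 2)) : E (n + 2) :=
  -sproj (xi p) (N p) (fderiv ℝ xi p v)

/-- Shape operator `A_N(p)(v) = -P_p(D_v N (p))`. -/
def AN {n : ℕ} (xi N : E (n + 2) → E (n + 2)) (p v : E (n + 2)) : E (n + 2) :=
  -sproj (xi p) (N p) (fderiv ℝ N p v)

/-- Transversal one-form `τ_p(v) = η(D_v N(p), ξ p)`. -/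
def tau {n : ℕ} (xi N : E (n + 2) → E (n + 2)) (p v : E (n + 2)) : ℝ :=
  eta (fderiv ℝ N p v) (xi p)

/-- Screen part `Z*(p) = P_p(Z p)` of a vector field. -/
def Zstar {n : ℕ} (xi N Z : E (n + 2) → E (n + 2)) (p : E (n + 2)) : E (n + 2) :=
  sproj (xi p) (N p) (Z p)

/-- `A_{Z⊥}(p)(v) = η(Z p, N p) • A*_ξ(p)(v) + η(Z p, ξ p) • A_N(p)(v)`. -/
def AZperp {n : ℕ} (xi N Z : E (n + 2) → E (n + 2)) (p v : E (n + 2)) : E (n + 2) :=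
  eta (Z p) (N p) • Astar xi N p v + eta (Z p) (xi p) • AN xi N p v

lemma eta_comm {n : ℕ} (x y : E (n + 2)) : eta x y = eta y x := by
  simp only [eta, mul_comm]

lemma eta_smul_left {n : ℕ} (a : ℝ) (x y : E (n + 2)) : eta (a • x) y = a * eta x y := by
  simp only [eta, PiLp.smul_apply, smul_eq_mul, Finset.mul_sum, mul_sub, mul_assoc]
  ring

lemma eta_sub_left {n : ℕ} (x y z : E (n + 2)) : eta (x - y) z = eta x z - eta y z := by
  simp only [eta, PiLp.sub_apply, sub_mul, Finset.sum_sub_distrib]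
  ring

lemma sproj_smul {n : ℕ} (xi N : E (n + 2)) (a : ℝ) (w : E (n + 2)) :
    sproj xi N (a • w) = a • sproj xi N w := by
  simp only [sproj, eta_smul_left, smul_sub, mul_smul]

lemma sproj_sub {n : ℕ} (xi N w1 w2 : E (n + 2)) :
    sproj xi N (w1 - w2) = sproj xi N w1 - sproj xi N w2 := by
  simp only [sproj, eta_sub_left, sub_smul]
  abel

lemma main_calc {n : ℕ} (xi N X : E (n + 2) → E (n + 2)) (c φ : E (n + 2) → ℝ)
    (p v : E (n + 2)) (hXd : DifferentiableAt ℝ X p) (hcd : DifferentiableAt ℝ c p)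
    (hc : c p ≠ 0) (hX0 : sproj (xi p) (N p) (X p) = 0) (hv : sproj (xi p) (N p) v = v)
    (h : fderiv ℝ (fun q => c q • X q) p = φ p • ContinuousLinearMap.id ℝ (E (n + 2))) :
    -sproj (xi p) (N p) (fderiv ℝ X p v) = (-(φ p / c p)) • v := by
  have h2 := fderiv_fun_smul (𝕜 := ℝ) hcd hXd
  rw [h] at h2
  have h3 : φ p • v = c p • fderiv ℝ X p v + fderiv ℝ c p v • X p := by
    have := congrArg (fun L => L v) h2
    simpa using this
  have h4 : fderiv ℝ X p v = (c p)⁻¹ • (φ p • v - fderiv ℝ c p v • X p) := by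
    rw [eq_inv_smul_iff₀ hc, h3]
    abel
  rw [h4, sproj_smul, sproj_sub, sproj_smul, sproj_smul, hX0, hv, smul_zero, sub_zero,
    smul_smul, neg_smul, div_eq_inv_mul, mul_comm]

/-- If a closed conformal field lies in the radical direction then the null
hypersurface is totally umbilical (totally geodesic when the field is parallel); if it lies
in the transversal direction then the screen distribution is totally umbilical (resp. totally
geodesic) (flat Minkowski ambient form). -/
theorem cc_field_radical_or_transversal_umbilical {n : ℕ}
    (U : Set (E (n + 2))) (hU : IsOpen U)
    (ξ N : E (n + 2) → E (n + 2)) (c φ : E (n + 2) → ℝ)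
    (hξd : ∀ p ∈ U, DifferentiableAt ℝ ξ p)
    (hNd : ∀ p ∈ U, DifferentiableAt ℝ N p)
    (hcd : ∀ p ∈ U, DifferentiableAt ℝ c p)
    (hc0 : ∀ p ∈ U, c p ≠ 0)
    (hξξ : ∀ p ∈ U, eta (ξ p) (ξ p) = 0)
    (hNN : ∀ p ∈ U, eta (N p) (N p) = 0)
    (hξN : ∀ p ∈ U, eta (ξ p) (N p) = 1) :
    ((∀ p ∈ U, fderiv ℝ (fun q => c q • ξ q) p = φ p • ContinuousLinearMap.id ℝ (E (n + 2))) →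
      (∀ p ∈ U, ∀ v : E (n + 2), eta v (ξ p) = 0 → eta v (N p) = 0 →
        Astar ξ N p v = (-(φ p / c p)) • v) ∧
      ((∀ p ∈ U, φ p = 0) → ∀ p ∈ U, ∀ v : E (n + 2), eta v (ξ p) = 0 → eta v (N p) = 0 →
        Astar ξ N p v = 0)) ∧
    ((∀ p ∈ U, fderiv ℝ (fun q => c q • N q) p = φ p • ContinuousLinearMap.id ℝ (E (n + 2))) →
      (∀ p ∈ U, ∀ v : E (n + 2), eta v (ξ p) = 0 → eta v (N p) = 0 →
        AN ξ N p v = (-(φ p / c p)) • v) ∧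
      ((∀ p ∈ U, φ p = 0) → ∀ p ∈ U, ∀ v : E (n + 2), eta v (ξ p) = 0 → eta v (N p) = 0 →
        AN ξ N p v = 0)) := by
  constructor
  · intro hZ
    have key : ∀ p ∈ U, ∀ v : E (n + 2), eta v (ξ p) = 0 → eta v (N p) = 0 →
        Astar ξ N p v = (-(φ p / c p)) • v := by
      intro p hp v hv1 hv2
      apply main_calc ξ N ξ c φ p v (hξd p hp) (hcd p hp) (hc0 p hp)
      · simp [sproj, hξξ p hp, hξN p hp]
      · simp [sproj, hv1, hv2]
      · exact hZ p hp
    refine ⟨key, fun hφ p hp v hv1 hv2 => ?_⟩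
    rw [key p hp v hv1 hv2, hφ p hp]
    simp
  · intro hZ
    have key : ∀ p ∈ U, ∀ v : E (n + 2), eta v (ξ p) = 0 → eta v (N p) = 0 →
        AN ξ N p v = (-(φ p / c p)) • v := by
      intro p hp v hv1 hv2
      apply main_calc ξ N N c φ p v (hNd p hp) (hcd p hp) (hc0 p hp)
      · have : eta (N p) (ξ p) = 1 := by rw [eta_comm]; exact hξN p hp
        simp [sproj, hNN p hp, this]
      · simp [sproj, hv1, hv2]
      · exact hZ p hp
    refine ⟨key, fun hφ p hp v hv1 hv2 => ?_⟩
    rw [key p hp v hv1 hv2, hφ p hp]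
    simp

end
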